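/- For every integer t ≥ 1, one has 1/√t ≤ Σ_{i=1}^t α_t^i / √i ≤ 2/√t. -/

import Mathlib

/-- Learning rate `α_t = (H+1)/(H+t)`. -/
noncomputable def lr (H : ℕ) (t : ℕ) : ℝ := ((H : ℝ) + 1) / ((H : ℝ) + t)

/-- Weights `α_t^0 = ∏_{j=1}^t (1 - α_j)` and `α_t^i = α_i ∏_{j=i+1}^t (1 - α_j)` for `i ≥ 1`. -/
noncomputable def alphaW (H : ℕ) (t i : ℕ) : ℝ :=
  if i = 0 then ∏ j ∈ Finset.Icc 1 t, (1 - lr H j)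
  else lr H i * ∏ j ∈ Finset.Icc (i + 1) t, (1 - lr H j)

lemma lr_nonneg (H t : ℕ) : 0 ≤ lr H t := by
  unfold lr; positivity

lemma lr_le_one (H t : ℕ) (ht : 1 ≤ t) : lr H t ≤ 1 := by
  unfold lr
  rw [div_le_one (by positivity)]
  have : (1:ℝ) ≤ t := by exact_mod_cast ht
  linarith

lemma alphaW_nonneg (H t i : ℕ) (hi : 1 ≤ i) : 0 ≤ alphaW H t i := by
  unfold alphaW
  rw [if_neg (by omega)]
  apply mul_nonneg (lr_nonneg H i)
  apply Finset.prod_nonneg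
  intro j hj
  simp only [Finset.mem_Icc] at hj
  have := lr_le_one H j (by omega)
  linarith

lemma alphaW_succ (H t i : ℕ) (hi1 : 1 ≤ i) (hi : i ≤ t) :
    alphaW H (t + 1) i = (1 - lr H (t + 1)) * alphaW H t i := by
  unfold alphaW
  rw [if_neg (by omega), if_neg (by omega),
    Finset.prod_Icc_succ_top (by omega : i + 1 ≤ t + 1)]
  ring

lemma alphaW_self (H t : ℕ) : alphaW H (t + 1) (t + 1) = lr H (t + 1) := by
  unfold alphaW
  rw [if_neg (by omega), Finset.Icc_eq_empty (by omega), Finset.prod_empty, mul_one]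

lemma sum_alphaW (H t : ℕ) (ht : 1 ≤ t) :
    ∑ i ∈ Finset.Icc 1 t, alphaW H t i = 1 := by
  induction t with
  | zero => omega
  | succ t ih =>
    rcases Nat.eq_or_lt_of_le ht with h | h
    · simp [← h, alphaW, lr]
      exact (by positivity : (H:ℝ) + 1 ≠ 0)
    · have ht' : 1 ≤ t := by omega
      rw [Finset.sum_Icc_succ_top (by omega : 1 ≤ t + 1), alphaW_self,
        Finset.sum_congr rfl (fun i hi => by
          simp only [Finset.mem_Icc] at hi
          exact alphaW_succ H t i hi.1 hi.2), ← Finset.mul_sum, ih ht']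
      ring

lemma key_sqrt (t : ℕ) : 2 * Real.sqrt t * Real.sqrt (t + 1) ≤ 2 * t + 1 := by
  have h1 : Real.sqrt t * Real.sqrt (t + 1) = Real.sqrt (t * (t + 1)) := by
    rw [← Real.sqrt_mul (by positivity)]
  have h2 : Real.sqrt ((t : ℝ) * (t + 1)) ≤ t + 1 / 2 := by
    rw [show (t : ℝ) + 1 / 2 = Real.sqrt (((t : ℝ) + 1 / 2) ^ 2) by
      rw [Real.sqrt_sq (by positivity)]]
    apply Real.sqrt_le_sqrt
    nlinarith
  nlinarith

lemma upper_bound (H : ℕ) (hH : 1 ≤ H) (t : ℕ) (ht : 1 ≤ t) :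
    (∑ i ∈ Finset.Icc 1 t, alphaW H t i / Real.sqrt i) ≤ 2 / Real.sqrt t := by
  induction t with
  | zero => omega
  | succ t ih =>
    rcases Nat.eq_or_lt_of_le ht with h | h
    · simp only [← h]
      norm_num [alphaW, lr]
      rw [div_self (by positivity)]
      norm_num
    · have ht' : 1 ≤ t := by omega
      have hrec : (∑ i ∈ Finset.Icc 1 (t + 1), alphaW H (t + 1) i / Real.sqrt i)
          = (1 - lr H (t + 1)) * (∑ i ∈ Finset.Icc 1 t, alphaW H t i / Real.sqrt i)
            + lr H (t + 1) / Real.sqrt (t + 1) := by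
        rw [Finset.sum_Icc_succ_top (by omega : 1 ≤ t + 1), alphaW_self,
          Finset.sum_congr rfl (fun i hi => by
            simp only [Finset.mem_Icc] at hi
            rw [alphaW_succ H t i hi.1 hi.2, mul_div_assoc]), ← Finset.mul_sum]
        push_cast
        ring
      rw [hrec]
      have halpha : lr H (t + 1) ≤ 1 := lr_le_one H (t + 1) (by omega)
      have hstep : (1 - lr H (t + 1)) * (∑ i ∈ Finset.Icc 1 t, alphaW H t i / Real.sqrt i)
          ≤ (1 - lr H (t + 1)) * (2 / Real.sqrt t) := by
        apply mul_le_mul_of_nonneg_left (ih ht') (by linarith)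
      have key : (1 - lr H (t + 1)) * (2 / Real.sqrt t) + lr H (t + 1) / Real.sqrt (t + 1)
          ≤ 2 / Real.sqrt (t + 1) := by
        have hs : (0:ℝ) < Real.sqrt t := Real.sqrt_pos.mpr (by exact_mod_cast ht')
        have hs' : (0:ℝ) < Real.sqrt (t + 1) := Real.sqrt_pos.mpr (by positivity)
        have hsq : Real.sqrt t * Real.sqrt t = (t : ℝ) :=
          Real.mul_self_sqrt (by positivity)
        have hsq' : Real.sqrt ((t : ℝ) + 1) * Real.sqrt ((t : ℝ) + 1) = (t : ℝ) + 1 :=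
          Real.mul_self_sqrt (by positivity)
        have hkey := key_sqrt t
        have hd : (0:ℝ) < (H : ℝ) + (t + 1) := by positivity
        have hlr : lr H (t + 1) = ((H : ℝ) + 1) / ((H : ℝ) + (t + 1)) := by
          unfold lr; push_cast; ring_nf
        rw [hlr]
        have hH1 : (1:ℝ) ≤ H := by exact_mod_cast hH
        have hs0 : Real.sqrt t ≠ 0 := ne_of_gt hs
        have hs'0 : Real.sqrt ((t:ℝ) + 1) ≠ 0 := ne_of_gt hs'
        field_simp
        have hss : Real.sqrt t * Real.sqrt ((t:ℝ)+1) * (Real.sqrt t * Real.sqrt ((t:ℝ)+1))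
            = (t:ℝ) * ((t:ℝ)+1) := by
          calc Real.sqrt t * Real.sqrt ((t:ℝ)+1) * (Real.sqrt t * Real.sqrt ((t:ℝ)+1))
              = (Real.sqrt t * Real.sqrt t) * (Real.sqrt ((t:ℝ)+1) * Real.sqrt ((t:ℝ)+1)) := by
                ring
            _ = (t:ℝ) * ((t:ℝ)+1) := by rw [hsq, hsq']
        have h3 : 2 * ((t:ℝ) * ((t:ℝ)+1)) ≤ (2*(t:ℝ)+1) * (Real.sqrt t * Real.sqrt ((t:ℝ)+1)) := by
          have := mul_le_mul_of_nonneg_right hkey (mul_nonneg hs.le hs'.le)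
          nlinarith [this, hss]
        nlinarith [h3, hd, hH1, mul_pos hs hs',
          mul_le_mul_of_nonneg_left h3 hd.le,
          mul_nonneg (mul_nonneg hd.le hd.le) (mul_nonneg hs.le hs'.le),
          mul_nonneg hd.le (mul_nonneg hs.le hs'.le)]
      push_cast at key ⊢
      linarith

/-- `1/√t ≤ ∑_{i=1}^t α_t^i/√i ≤ 2/√t` for all `t ≥ 1`. -/
theorem alphaW_sqrt_sum (H : ℕ) (hH : 1 ≤ H) (t : ℕ) (ht : 1 ≤ t) :
    1 / Real.sqrt t ≤ (∑ i ∈ Finset.Icc 1 t, alphaW H t i / Real.sqrt i) ∧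
    (∑ i ∈ Finset.Icc 1 t, alphaW H t i / Real.sqrt i) ≤ 2 / Real.sqrt t := by
  constructor
  · have h1 : 1 / Real.sqrt t = ∑ i ∈ Finset.Icc 1 t, alphaW H t i / Real.sqrt t := by
      rw [← Finset.sum_div, sum_alphaW H t ht]
    rw [h1]
    apply Finset.sum_le_sum
    intro i hi
    simp only [Finset.mem_Icc] at hi
    have hi1 : (0:ℝ) < Real.sqrt i := Real.sqrt_pos.mpr (by exact_mod_cast hi.1)
    apply div_le_div_of_nonneg_left (alphaW_nonneg H t i hi.1) hi1
    exact Real.sqrt_le_sqrt (by exact_mod_cast hi.2)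
  · exact upper_bound H hH t ht
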